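/- With v_i defined by v_1 = ⌊q/p⌋, v_i = ⌊iq/p⌋ − (v_1 + ... + v_{i-1}) for 2 ≤ i ≤ p−1, and v_p = q − 1 − (v_1 + ... + v_{p-1}), where 0 < p < q and gcd(p,q) = 1, the sequence is palindromic: v_i = v_{p+1−i} for all 1 ≤ i ≤ p. -/

import Mathlib

/-- Key floor identity: for `1 ≤ k ≤ p-1` with `gcd p q = 1`,
`⌊kq/p⌋ + ⌊(p-k)q/p⌋ = q - 1`. -/
lemma stmt18_key (p q k : ℕ) (hp : 0 < p) (hpq : p < q) (hcop : Nat.Coprime p q)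
    (hk1 : 1 ≤ k) (hk2 : k ≤ p - 1) :
    k * q / p + (p - k) * q / p = q - 1 := by
  have hkp : k < p := by omega
  have hnd : ∀ m, 1 ≤ m → m < p → (m * q) % p ≠ 0 := by
    intro m hm1 hm2 h
    have hdvd : p ∣ m * q := Nat.dvd_of_mod_eq_zero h
    have : p ∣ m := (Nat.Coprime.dvd_of_dvd_mul_right hcop hdvd)
    have := Nat.le_of_dvd (by omega) this
    omega
  have hr1 := hnd k hk1 hkp
  have hr2 := hnd (p - k) (by omega) (by omega)
  have hd1 := Nat.div_add_mod (k * q) p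
  have hd2 := Nat.div_add_mod ((p - k) * q) p
  have hsum : k * q + (p - k) * q = p * q := by
    rw [← Nat.add_mul]; congr 1; omega
  -- remainders sum to p
  have hrr : (k * q) % p + ((p - k) * q) % p = p := by
    have hmod : ((k * q) % p + ((p - k) * q) % p) % p = 0 := by
      rw [← Nat.add_mod, hsum, Nat.mul_mod_right]
    obtain ⟨c, hc⟩ := Nat.dvd_of_mod_eq_zero hmod
    have hlt : (k * q) % p < p := Nat.mod_lt _ hp
    have hlt2 : ((p - k) * q) % p < p := Nat.mod_lt _ hp
    have hc2 : c < 2 := by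
      have : p * c < p * 2 := by omega
      exact Nat.lt_of_mul_lt_mul_left this
    have hc1 : 1 ≤ c := by
      rcases Nat.eq_zero_or_pos c with h | h
      · exfalso; rw [h, Nat.mul_zero] at hc; omega
      · exact h
    have : c = 1 := by omega
    rw [this, Nat.mul_one] at hc; omega
  have hq1 : 1 ≤ q := by omega
  have : p * (k * q / p + (p - k) * q / p) = p * (q - 1) := by
    rw [Nat.mul_add, Nat.mul_sub_one]
    omega
  exact Nat.eq_of_mul_eq_mul_left hp this

/-- Partial sums equal floors. -/
lemma stmt18_sum (p q : ℕ) (v : ℕ → ℕ) (hp : 0 < p) (hpq : p < q)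
    (h1 : 1 < p → v 1 = q / p)
    (hmid : ∀ i, 2 ≤ i → i ≤ p - 1 → v i = i * q / p - ∑ j ∈ Finset.Icc 1 (i - 1), v j) :
    ∀ i, 1 ≤ i → i ≤ p - 1 → ∑ j ∈ Finset.Icc 1 i, v j = i * q / p := by
  intro i
  induction i with
  | zero => intro h; omega
  | succ n ih =>
    intro h1n h2n
    rcases Nat.eq_zero_or_pos n with h0 | hn
    · subst h0
      simp only [Finset.Icc_self, Finset.sum_singleton]
      rw [h1 (by omega), Nat.one_mul]
    · have hs := ih hn (by omega)
      rw [Finset.sum_Icc_succ_top (by omega : 1 ≤ n + 1), hs]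
      have hv := hmid (n + 1) (by omega) h2n
      simp only [Nat.add_sub_cancel] at hv
      rw [hv, hs]
      have hle : n * q / p ≤ (n + 1) * q / p :=
        Nat.div_le_div_right (Nat.mul_le_mul_right _ (by omega))
      omega

/-- With v₁ = ⌊q/p⌋, vᵢ = ⌊iq/p⌋ − (v₁ + ⋯ + vᵢ₋₁) for 2 ≤ i ≤ p−1, and
vₚ = q − 1 − (v₁ + ⋯ + vₚ₋₁), the sequence is palindromic: vᵢ = v_{p+1−i}. -/
theorem stmt18 (p q : ℕ) (v : ℕ → ℕ) (hp : 0 < p) (hpq : p < q)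
    (hcop : Nat.Coprime p q)
    (h1 : 1 < p → v 1 = q / p)
    (hmid : ∀ i, 2 ≤ i → i ≤ p - 1 → v i = i * q / p - ∑ j ∈ Finset.Icc 1 (i - 1), v j)
    (hlast : v p = q - 1 - ∑ j ∈ Finset.Icc 1 (p - 1), v j) :
    ∀ i, 1 ≤ i → i ≤ p → v i = v (p + 1 - i) := by
  have hS := stmt18_sum p q v hp hpq h1 hmid
  -- v p = v 1 (for p ≥ 2)
  have hvp : 1 < p → v p = v 1 := by
    intro hp2
    have hs := hS (p - 1) (by omega) (le_refl _)
    have hkey := stmt18_key p q (p - 1) hp hpq hcop (by omega) (le_refl _)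
    have hpk : p - (p - 1) = 1 := by omega
    rw [hpk, Nat.one_mul] at hkey
    rw [hlast, hs, h1 hp2]
    omega
  intro i hi1 hip
  rcases Nat.eq_or_lt_of_le hip with heq | hlt
  · -- i = p : goal v p = v 1
    have h1i : p + 1 - i = 1 := by omega
    rw [h1i, heq]
    rcases Nat.eq_or_lt_of_le hi1 with h | h
    · rw [heq] at h; rw [← h]
    · exact hvp (by omega)
  · rcases Nat.eq_or_lt_of_le hi1 with heq1 | hgt1
    · -- i = 1 : goal v 1 = v p
      have : p + 1 - i = p := by omega
      rw [this, ← heq1, hvp (by omega)]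
    · -- 2 ≤ i ≤ p - 1
      have hi2 : 2 ≤ i := hgt1
      have hip1 : i ≤ p - 1 := by omega
      set j := p + 1 - i with hj
      have hj2 : 2 ≤ j := by omega
      have hjp1 : j ≤ p - 1 := by omega
      have hvi := hmid i hi2 hip1
      have hvj := hmid j hj2 hjp1
      rw [hS (i - 1) (by omega) (by omega)] at hvi
      rw [hS (j - 1) (by omega) (by omega)] at hvj
      have hk1 := stmt18_key p q i hp hpq hcop (by omega) hip1
      have hk2 := stmt18_key p q (i - 1) hp hpq hcop (by omega) (by omega)
      have hji : j = p - i + 1 := by omega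
      have hji1 : j - 1 = p - i := by omega
      have hji2 : p - (i - 1) = j := by omega
      rw [hji2] at hk2
      rw [hji1] at hvj
      rw [hvi, hvj]
      omega
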